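/- Let α_{k+1},…,αₙ be real numbers with n − k ≥ r + 2, and suppose that σ_r(α_{l₁},…,α_{l_{r+1}}) = 0 for every choice of r+1 distinct indices l₁,…,l_{r+1} in {k+1,…,n}. Then σ_r(α_{k+1},…,αₙ) = 0 and σ_{r+1}(α_{k+1},…,αₙ) = 0. -/

import Mathlib

set_option maxHeartbeats 1000000


/-- The `r`-th elementary symmetric polynomial of `v` restricted to a subset `t`. -/
noncomputable def esymmOn {n : ℕ} (r : ℕ) (t : Finset (Fin n)) (v : Fin n → ℝ) : ℝ :=
  ∑ s ∈ Finset.powersetCard r t, ∏ i ∈ s, v i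

section Aux

open Finset

variable {α : Type*} [DecidableEq α]

lemma aux_powersetCard_pred {t : Finset α} {k : ℕ} (ht : t.card = k + 1) :
    t.powersetCard k = t.image (t.erase ·) := by
  ext s
  simp only [mem_powersetCard, mem_image]
  constructor
  · rintro ⟨hsub, hcard⟩
    have hd : (t \ s).card = 1 := by
      rw [card_sdiff_of_subset hsub, ht, hcard]; omega
    obtain ⟨i, hi⟩ := Finset.card_eq_one.1 hd
    have hit : i ∈ t := by
      have : i ∈ t \ s := hi ▸ Finset.mem_singleton_self i
      exact (Finset.mem_sdiff.1 this).1
    refine ⟨i, hit, ?_⟩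
    rw [Finset.erase_eq, ← hi, Finset.sdiff_sdiff_self_left,
      Finset.inter_eq_right.2 hsub]
  · rintro ⟨i, hi, rfl⟩
    exact ⟨Finset.erase_subset _ _, by rw [Finset.card_erase_of_mem hi, ht]; omega⟩

lemma aux_sum_powersetCard_pred {t : Finset α} {k : ℕ} (ht : t.card = k + 1)
    (f : Finset α → ℝ) :
    ∑ s ∈ t.powersetCard k, f s = ∑ i ∈ t, f (t.erase i) := by
  rw [aux_powersetCard_pred ht]
  refine Finset.sum_image ?_
  intro i hi j hj hij
  by_contra hne
  exact (Finset.notMem_erase i t) ((show t.erase i = t.erase j from hij) ▸ Finset.mem_erase.2 ⟨hne, hi⟩)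

end Aux

open Finset

lemma esymmOn_insert {n : ℕ} (k : ℕ) {t : Finset (Fin n)} {x : Fin n} (hx : x ∉ t)
    (v : Fin n → ℝ) :
    esymmOn (k + 1) (insert x t) v = esymmOn (k + 1) t v + v x * esymmOn k t v := by
  unfold esymmOn
  rw [Finset.powersetCard_succ_insert hx, Finset.sum_union, Finset.sum_image, Finset.mul_sum]
  · congr 1
    refine Finset.sum_congr rfl fun s hs => ?_
    have hxs : x ∉ s := fun hxx => hx ((Finset.mem_powersetCard.1 hs).1 hxx)
    rw [Finset.prod_insert hxs]
  · intro s₁ h₁ s₂ h₂ hins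
    have hx₁ : x ∉ s₁ := fun hxx => hx ((Finset.mem_powersetCard.1 h₁).1 hxx)
    have hx₂ : x ∉ s₂ := fun hxx => hx ((Finset.mem_powersetCard.1 h₂).1 hxx)
    rw [← Finset.erase_insert hx₁, ← Finset.erase_insert hx₂, hins]
  · rw [Finset.disjoint_left]
    intro s hs hs'
    obtain ⟨s', _, rfl⟩ := Finset.mem_image.1 hs'
    exact hx ((Finset.mem_powersetCard.1 hs).1 (Finset.mem_insert_self x s'))

lemma esymmOn_card {n : ℕ} {k : ℕ} {t : Finset (Fin n)} (ht : t.card = k)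
    (v : Fin n → ℝ) : esymmOn k t v = ∏ i ∈ t, v i := by
  unfold esymmOn
  rw [← ht, Finset.powersetCard_self, Finset.sum_singleton]

/-- double counting swap -/
lemma aux_swap {n : ℕ} (k : ℕ) (f : Finset (Fin n) → ℝ) :
    ∑ t ∈ Finset.powersetCard (k + 1) (Finset.univ : Finset (Fin n)), ∑ i ∈ t, f (t.erase i)
      = ∑ s ∈ Finset.powersetCard k (Finset.univ : Finset (Fin n)), ∑ _i ∈ sᶜ, f s := by
  rw [Finset.sum_sigma', Finset.sum_sigma']
  refine Finset.sum_nbij' (fun p => ⟨p.1.erase p.2, p.2⟩) (fun p => ⟨insert p.2 p.1, p.2⟩)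
    ?_ ?_ ?_ ?_ ?_
  · rintro ⟨t, i⟩ hp
    simp only [Finset.mem_sigma, Finset.mem_powersetCard] at hp ⊢
    obtain ⟨⟨_, hcard⟩, hit⟩ := hp
    exact ⟨⟨Finset.subset_univ _, by rw [Finset.card_erase_of_mem hit, hcard]; omega⟩,
      Finset.mem_compl.2 (Finset.notMem_erase _ _)⟩
  · rintro ⟨s, i⟩ hp
    simp only [Finset.mem_sigma, Finset.mem_powersetCard, Finset.mem_compl] at hp ⊢
    obtain ⟨⟨_, hcard⟩, his⟩ := hp
    exact ⟨⟨Finset.subset_univ _, by rw [Finset.card_insert_of_notMem his, hcard]⟩,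
      Finset.mem_insert_self _ _⟩
  · rintro ⟨t, i⟩ hp
    simp only [Finset.mem_sigma] at hp
    simp [Finset.insert_erase hp.2]
  · rintro ⟨s, i⟩ hp
    simp only [Finset.mem_sigma, Finset.mem_compl] at hp
    simp [Finset.erase_insert hp.2]
  · rintro ⟨t, i⟩ _
    rfl

/-- If `σ_r` vanishes on every `(r+1)`-subset of the `α`'s (with at least `r+2` of them),
then `σ_r` and `σ_{r+1}` vanish on the full tuple. -/
theorem esymm_subsets_vanish (m r : ℕ) (hm : r + 2 ≤ m) (a : Fin m → ℝ)
    (h : ∀ t : Finset (Fin m), t.card = r + 1 → esymmOn r t a = 0) :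
    esymmOn r Finset.univ a = 0 ∧ esymmOn (r + 1) Finset.univ a = 0 := by
  have hcardu : (Finset.univ : Finset (Fin m)).card = m := by simp
  -- Part 1
  have part1 : esymmOn r Finset.univ a = 0 := by
    have hz : ∑ t ∈ Finset.powersetCard (r + 1) (Finset.univ : Finset (Fin m)),
        esymmOn r t a = 0 := by
      refine Finset.sum_eq_zero fun t ht => h t (Finset.mem_powersetCard.1 ht).2
    have heq : ∑ t ∈ Finset.powersetCard (r + 1) (Finset.univ : Finset (Fin m)),
        esymmOn r t a = ((m - r : ℕ) : ℝ) * esymmOn r Finset.univ a := by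
      calc ∑ t ∈ Finset.powersetCard (r + 1) (Finset.univ : Finset (Fin m)), esymmOn r t a
          = ∑ t ∈ Finset.powersetCard (r + 1) (Finset.univ : Finset (Fin m)),
              ∑ i ∈ t, ∏ j ∈ t.erase i, a j := by
            refine Finset.sum_congr rfl fun t ht => ?_
            exact aux_sum_powersetCard_pred (Finset.mem_powersetCard.1 ht).2
              (fun s => ∏ j ∈ s, a j)
        _ = ∑ s ∈ Finset.powersetCard r (Finset.univ : Finset (Fin m)),
              ∑ _i ∈ sᶜ, ∏ j ∈ s, a j := aux_swap r (fun s => ∏ j ∈ s, a j)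
        _ = ((m - r : ℕ) : ℝ) * esymmOn r Finset.univ a := by
            unfold esymmOn
            rw [Finset.mul_sum]
            refine Finset.sum_congr rfl fun s hs => ?_
            rw [Finset.sum_const, Finset.card_compl,
              (Finset.mem_powersetCard.1 hs).2, nsmul_eq_mul, Fintype.card_fin]
    have hmr : ((m - r : ℕ) : ℝ) ≠ 0 := by
      have : 0 < m - r := by omega
      positivity
    have := heq ▸ hz
    exact (mul_eq_zero.1 this).resolve_left hmr
  -- Part 2: every (r+1)-subset has zero product
  have prodzero : ∀ t : Finset (Fin m), t.card = r + 1 → ∏ i ∈ t, a i = 0 := by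
    intro t ht
    have hne : tᶜ.Nonempty := by
      rw [← Finset.card_pos, Finset.card_compl, Fintype.card_fin, ht]; omega
    obtain ⟨x, hx⟩ := hne
    have hxt : x ∉ t := Finset.mem_compl.1 hx
    set u := insert x t with hu
    have hucard : u.card = r + 2 := by
      rw [hu, Finset.card_insert_of_notMem hxt, ht]
    -- A: esymmOn (r+1) u a = ∏ t
    have hA : esymmOn (r + 1) u a = ∏ i ∈ t, a i := by
      rw [hu, esymmOn_insert r hxt, h t ht, mul_zero, add_zero, esymmOn_card ht]
    -- B: for i ∈ u, esymmOn (r+1) u a = ∏ (u.erase i)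
    have hB : ∀ i ∈ u, ∏ j ∈ u.erase i, a j = esymmOn (r + 1) u a := by
      intro i hi
      have hcard : (u.erase i).card = r + 1 := by
        rw [Finset.card_erase_of_mem hi, hucard]; omega
      have : esymmOn (r + 1) (insert i (u.erase i)) a
          = esymmOn (r + 1) (u.erase i) a + a i * esymmOn r (u.erase i) a :=
        esymmOn_insert r (Finset.notMem_erase _ _) a
      rw [Finset.insert_erase hi, h _ hcard, mul_zero, add_zero,
        esymmOn_card hcard] at this
      exact this.symm
    -- C: esymmOn (r+1) u a = (r+2) * esymmOn (r+1) u a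
    have hC : esymmOn (r + 1) u a = ((r + 2 : ℕ) : ℝ) * esymmOn (r + 1) u a := by
      conv_lhs => rw [esymmOn]
      rw [aux_sum_powersetCard_pred (show u.card = (r+1)+1 by rw [hucard])
        (fun s => ∏ j ∈ s, a j)]
      rw [Finset.sum_congr rfl hB, Finset.sum_const, hucard, nsmul_eq_mul]
    have : esymmOn (r + 1) u a = 0 := by
      have h2 : (((r + 2 : ℕ) : ℝ) - 1) * esymmOn (r + 1) u a = 0 := by
        linarith [hC]
      have hne2 : ((r + 2 : ℕ) : ℝ) - 1 ≠ 0 := by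
        push_cast; intro hh; nlinarith
      exact (mul_eq_zero.1 h2).resolve_left hne2
    rw [← hA, this]
  have part2 : esymmOn (r + 1) Finset.univ a = 0 := by
    unfold esymmOn
    refine Finset.sum_eq_zero fun s hs => ?_
    exact prodzero s (Finset.mem_powersetCard.1 hs).2
  exact ⟨part1, part2⟩
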